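/- arXiv:0911.4025 — 5 statements merged into one kernel-verified Lean document; each statement's English description precedes it below -/
import Mathlib

section
/- Let K be a field of characteristic different from 2 and 3. For every (x,y,z,w) ∈ K⁴ with (x,y,z,w) ≠ (0,0,0,0) satisfying x²+y²+z²+w² = 0 and x³+y³+z³+w³ = 0, the 2×4 matrix with rows (2x, 2y, 2z, 2w) and (3x², 3y², 3z², 3w²) has rank 2. In particular, the projective curve C in P³ defined by these two equations is nonsingular over any such field. -/
lemma aux_rank {K : Type*} [Field K] (M : Matrix (Fin 2) (Fin 4) K) (i j : Fin 4)
    (h : M 0 i * M 1 j - M 0 j * M 1 i ≠ 0) : M.rank = 2 := by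
  set N : Matrix (Fin 2) (Fin 2) K := !![M 0 i, M 0 j; M 1 i, M 1 j] with hNdef
  have hdet : N.det ≠ 0 := by
    rw [hNdef, Matrix.det_fin_two_of]
    exact h
  have hN : N.rank = 2 := by
    have := Matrix.rank_of_isUnit N ((Matrix.isUnit_iff_isUnit_det N).2 (isUnit_iff_ne_zero.2 hdet))
    simpa using this
  set P : Matrix (Fin 4) (Fin 2) K := Matrix.of fun k l => if k = ![i, j] l then 1 else 0 with hP
  have hMP : M * P = N := by
    ext a b
    fin_cases b <;>
      simp [hP, hNdef, Matrix.mul_apply, mul_ite, Finset.sum_ite_eq'] <;>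
      fin_cases a <;> first | rfl | (rw [Finset.sum_eq_single i (by intro b _ hb; simp [hb]) (by simp)]; simp)
  have hle : (2 : ℕ) ≤ M.rank := by
    calc (2 : ℕ) = (M * P).rank := by rw [hMP, hN]
    _ ≤ M.rank := Matrix.rank_mul_le_left M P
  have hge : M.rank ≤ 2 := by simpa using M.rank_le_card_height
  omega

lemma aux_eq {K : Type*} [Field K] {a b : K} (ha : a ≠ 0) (hb : b ≠ 0)
    (h : a * b * (b - a) = 0) : b = a := by
  rcases mul_eq_zero.1 h with h | h
  · rcases mul_eq_zero.1 h with h | h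
    · exact absurd h ha
    · exact absurd h hb
  · exact sub_eq_zero.1 h

/-- Over a field `K` of characteristic different from `2` and `3`,
at every nonzero solution `(x,y,z,w)` of `x²+y²+z²+w² = 0`, `x³+y³+z³+w³ = 0`, the
Jacobian matrix of the two defining forms has full rank `2`; in particular the
projective curve `C ⊂ ℙ³` defined by these equations is nonsingular. -/
theorem stmt_1 (K : Type*) [Field K] (h2 : (2 : K) ≠ 0) (h3 : (3 : K) ≠ 0)
    (x y z w : K) (hne : (x, y, z, w) ≠ (0, 0, 0, 0))
    (e1 : x ^ 2 + y ^ 2 + z ^ 2 + w ^ 2 = 0)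
    (e2 : x ^ 3 + y ^ 3 + z ^ 3 + w ^ 3 = 0) :
    Matrix.rank !![2 * x, 2 * y, 2 * z, 2 * w;
                   3 * x ^ 2, 3 * y ^ 2, 3 * z ^ 2, 3 * w ^ 2] = 2 := by
  have h4 : (4 : K) ≠ 0 := by
    have : (4 : K) = 2 * 2 := by norm_num
    rw [this]; exact mul_ne_zero h2 h2
  have h6 : (6 : K) ≠ 0 := by
    have : (6 : K) = 2 * 3 := by norm_num
    rw [this]; exact mul_ne_zero h2 h3
  have key : x * y * (y - x) ≠ 0 ∨ x * z * (z - x) ≠ 0 ∨ x * w * (w - x) ≠ 0 ∨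
      y * z * (z - y) ≠ 0 ∨ y * w * (w - y) ≠ 0 ∨ z * w * (w - z) ≠ 0 := by
    by_contra hc
    push_neg at hc
    obtain ⟨hxy, hxz, hxw, hyz, hyw, hzw⟩ := hc
    by_cases hx : x = 0 <;> by_cases hy : y = 0 <;> by_cases hz : z = 0 <;> by_cases hw : w = 0
    · exact hne (by simp [hx, hy, hz, hw])
    · subst hx; subst hy; subst hz
      exact (mul_ne_zero hw (pow_ne_zero 2 hw)) (by linear_combination e2)
    · subst hx; subst hy; subst hw
      exact (mul_ne_zero hz (pow_ne_zero 2 hz)) (by linear_combination e2)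
    · subst hx; subst hy; have heq := aux_eq hz hw hzw
      subst heq
      exact (mul_ne_zero h2 (pow_ne_zero 2 hz)) (by linear_combination e1)
    · subst hx; subst hz; subst hw
      exact (mul_ne_zero hy (pow_ne_zero 2 hy)) (by linear_combination e2)
    · subst hx; subst hz; have heq := aux_eq hy hw hyw
      subst heq
      exact (mul_ne_zero h2 (pow_ne_zero 2 hy)) (by linear_combination e1)
    · subst hx; subst hw; have heq := aux_eq hy hz hyz
      subst heq
      exact (mul_ne_zero h2 (pow_ne_zero 2 hy)) (by linear_combination e1)
    · subst hx
      have hzy := aux_eq hy hz hyz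
      have hwy := aux_eq hy hw hyw
      subst hzy; subst hwy
      exact (mul_ne_zero h3 (pow_ne_zero 2 hy)) (by linear_combination e1)
    · subst hy; subst hz; subst hw
      exact (mul_ne_zero hx (pow_ne_zero 2 hx)) (by linear_combination e2)
    · subst hy; subst hz; have heq := aux_eq hx hw hxw
      subst heq
      exact (mul_ne_zero h2 (pow_ne_zero 2 hx)) (by linear_combination e1)
    · subst hy; subst hw; have heq := aux_eq hx hz hxz
      subst heq
      exact (mul_ne_zero h2 (pow_ne_zero 2 hx)) (by linear_combination e1)
    · subst hy
      have hzx := aux_eq hx hz hxz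
      have hwx := aux_eq hx hw hxw
      subst hzx; subst hwx
      exact (mul_ne_zero h3 (pow_ne_zero 2 hx)) (by linear_combination e1)
    · subst hz; subst hw; have heq := aux_eq hx hy hxy
      subst heq
      exact (mul_ne_zero h2 (pow_ne_zero 2 hx)) (by linear_combination e1)
    · subst hz
      have hyx := aux_eq hx hy hxy
      have hwx := aux_eq hx hw hxw
      subst hyx; subst hwx
      exact (mul_ne_zero h3 (pow_ne_zero 2 hx)) (by linear_combination e1)
    · subst hw
      have hyx := aux_eq hx hy hxy
      have hzx := aux_eq hx hz hxz
      subst hyx; subst hzx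
      exact (mul_ne_zero h3 (pow_ne_zero 2 hx)) (by linear_combination e1)
    · have hyx := aux_eq hx hy hxy
      have hzx := aux_eq hx hz hxz
      have hwx := aux_eq hx hw hxw
      subst hyx; subst hzx; subst hwx
      exact (mul_ne_zero h4 (pow_ne_zero 2 hx)) (by linear_combination e1)
  rcases key with h | h | h | h | h | h
  · refine aux_rank _ 0 1 ?_
    show 2 * x * (3 * y ^ 2) - 2 * y * (3 * x ^ 2) ≠ 0
    have e : 2 * x * (3 * y ^ 2) - 2 * y * (3 * x ^ 2) = 6 * (x * y * (y - x)) := by ring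
    rw [e]; exact mul_ne_zero h6 h
  · refine aux_rank _ 0 2 ?_
    show 2 * x * (3 * z ^ 2) - 2 * z * (3 * x ^ 2) ≠ 0
    have e : 2 * x * (3 * z ^ 2) - 2 * z * (3 * x ^ 2) = 6 * (x * z * (z - x)) := by ring
    rw [e]; exact mul_ne_zero h6 h
  · refine aux_rank _ 0 3 ?_
    show 2 * x * (3 * w ^ 2) - 2 * w * (3 * x ^ 2) ≠ 0
    have e : 2 * x * (3 * w ^ 2) - 2 * w * (3 * x ^ 2) = 6 * (x * w * (w - x)) := by ring
    rw [e]; exact mul_ne_zero h6 h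
  · refine aux_rank _ 1 2 ?_
    show 2 * y * (3 * z ^ 2) - 2 * z * (3 * y ^ 2) ≠ 0
    have e : 2 * y * (3 * z ^ 2) - 2 * z * (3 * y ^ 2) = 6 * (y * z * (z - y)) := by ring
    rw [e]; exact mul_ne_zero h6 h
  · refine aux_rank _ 1 3 ?_
    show 2 * y * (3 * w ^ 2) - 2 * w * (3 * y ^ 2) ≠ 0
    have e : 2 * y * (3 * w ^ 2) - 2 * w * (3 * y ^ 2) = 6 * (y * w * (w - y)) := by ring
    rw [e]; exact mul_ne_zero h6 h
  · refine aux_rank _ 2 3 ?_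
    show 2 * z * (3 * w ^ 2) - 2 * w * (3 * z ^ 2) ≠ 0
    have e : 2 * z * (3 * w ^ 2) - 2 * w * (3 * z ^ 2) = 6 * (z * w * (w - z)) := by ring
    rw [e]; exact mul_ne_zero h6 h
end

section
/- Let K be a field of characteristic different from 2 and 3, and let f(x,y) = (x³+y³+1)² + (x²+y²+1)³ ∈ K[x,y]. A point (x,y) ∈ K² satisfies f(x,y) = 0, ∂f/∂x(x,y) = 0 and ∂f/∂y(x,y) = 0 if and only if x³+y³+1 = 0 and x²+y²+1 = 0. -/
open MvPolynomial

/-- The polynomial `f(x,y) = (x³+y³+1)² + (x²+y²+1)³`, the affine plane model of the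
curve `C : x²+y²+z²+w² = 0, x³+y³+z³+w³ = 0` in `ℙ³`. -/
noncomputable def fModel (K : Type*) [CommRing K] : MvPolynomial (Fin 2) K :=
  ((X 0) ^ 3 + (X 1) ^ 3 + 1) ^ 2 + ((X 0) ^ 2 + (X 1) ^ 2 + 1) ^ 3

/-- Auxiliary: if `A² + B³ = 0` and `t·A + B² = 0` where `A = t³+1`, `B = t²+1`,
then `A = 0` and `B = 0`. -/
lemma aux_one_var (K : Type*) [Field K] (h2 : (2 : K) ≠ 0) (h3 : (3 : K) ≠ 0)
    (t : K) (hA2 : (t^3+1)^2 + (t^2+1)^3 = 0)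
    (ht : t*(t^3+1) + (t^2+1)^2 = 0) :
    t^3+1 = 0 ∧ t^2+1 = 0 := by
  have key : (t^2+1)^3 * ((t^2+1) + t^2) = 0 := by
    linear_combination ((t^2+1)^2 - t*(t^3+1)) * ht + t^2 * hA2
  rcases mul_eq_zero.mp key with hB | hB
  · have hB0 : t^2+1 = 0 := pow_eq_zero_iff (by norm_num) |>.mp hB
    refine ⟨?_, hB0⟩
    have : (t^3+1)^2 = 0 := by linear_combination hA2 - (t^2+1)^2 * hB0
    exact pow_eq_zero_iff (by norm_num) |>.mp this
  · -- 2t²+1 = 0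
    exfalso
    have h4 : 2*t^2+1 = 0 := by linear_combination hB
    have htne : t ≠ 0 := by
      intro h0; rw [h0] at h4; simp at h4
    have h5 : 2*t^3+1 = 0 := by
      have hh : t * (2*t^3+1) = 0 := by linear_combination ht - h4
      exact (mul_eq_zero.mp hh).resolve_left htne
    exact h3 (by linear_combination (1 - 2*t^2 - 2*t) * h4 + (2*t + 2) * h5)

/-- Over a field of characteristic different from `2` and `3`, a point
`(x,y)` satisfies `f = ∂f/∂x = ∂f/∂y = 0` if and only if `x³+y³+1 = 0` and
`x²+y²+1 = 0`. -/
theorem stmt_2 (K : Type*) [Field K] (h2 : (2 : K) ≠ 0) (h3 : (3 : K) ≠ 0)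
    (x y : K) :
    (eval ![x, y] (fModel K) = 0 ∧
     eval ![x, y] (pderiv (0 : Fin 2) (fModel K)) = 0 ∧
     eval ![x, y] (pderiv (1 : Fin 2) (fModel K)) = 0)
    ↔ (x ^ 3 + y ^ 3 + 1 = 0 ∧ x ^ 2 + y ^ 2 + 1 = 0) := by
  have hf : eval ![x, y] (fModel K) = (x^3+y^3+1)^2 + (x^2+y^2+1)^3 := by simp [fModel]
  have hdx : eval ![x, y] (pderiv (0 : Fin 2) (fModel K)) =
      6*(x*(x*(x^3+y^3+1) + (x^2+y^2+1)^2)) := by simp [fModel]; ring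
  have hdy : eval ![x, y] (pderiv (1 : Fin 2) (fModel K)) =
      6*(y*(y*(x^3+y^3+1) + (x^2+y^2+1)^2)) := by simp [fModel]; ring
  have h6 : (6 : K) ≠ 0 := by
    have := mul_ne_zero h2 h3
    intro h; apply this; linear_combination h
  rw [hf, hdx, hdy]
  constructor
  · rintro ⟨hA2, hx6, hy6⟩
    have hx0 : x*(x*(x^3+y^3+1) + (x^2+y^2+1)^2) = 0 :=
      (mul_eq_zero.mp hx6).resolve_left h6
    have hy0 : y*(y*(x^3+y^3+1) + (x^2+y^2+1)^2) = 0 :=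
      (mul_eq_zero.mp hy6).resolve_left h6
    rcases mul_eq_zero.mp hx0 with hx | hx <;> rcases mul_eq_zero.mp hy0 with hy | hy
    · -- x = 0, y = 0
      exfalso
      rw [hx, hy] at hA2
      apply h2
      linear_combination hA2
    · -- x = 0, y·A + B² = 0
      subst hx
      have := aux_one_var K h2 h3 y (by linear_combination hA2) (by linear_combination hy)
      constructor
      · linear_combination this.1
      · linear_combination this.2
    · -- y = 0, x·A + B² = 0
      subst hy
      have := aux_one_var K h2 h3 x (by linear_combination hA2) (by linear_combination hx)
      constructor
      · linear_combination this.1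
      · linear_combination this.2
    · -- both x·A + B² = 0 and y·A + B² = 0
      have hxy : (x - y) * (x^3+y^3+1) = 0 := by linear_combination hx - hy
      rcases mul_eq_zero.mp hxy with h | hA
      · -- x = y
        have hxy' : x = y := by linear_combination h
        subst hxy'
        have key : (2*x^2+1)^3 * ((2*x^2+1) + x^2) = 0 := by
          linear_combination ((2*x^2+1)^2 - x*(2*x^3+1)) * hx + x^2 * hA2
        rcases mul_eq_zero.mp key with hB | hB
        · have hB0 : 2*x^2+1 = 0 := pow_eq_zero_iff (by norm_num) |>.mp hB
          have hA0 : (2*x^3+1)^2 = 0 := by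
            linear_combination hA2 - (2*x^2+1)^2 * hB0
          have hA0' : 2*x^3+1 = 0 := pow_eq_zero_iff (by norm_num) |>.mp hA0
          exact ⟨by linear_combination hA0', by linear_combination hB0⟩
        · exfalso
          have h4 : 3*x^2+1 = 0 := by linear_combination hB
          have hxne : x ≠ 0 := by
            intro h0; rw [h0] at h4; simp at h4
          have h5 : 3*x^3+1 = 0 := by
            have hh : x * (3*x^3+1) = 0 := by
              linear_combination hx - (x^2+1) * h4
            exact (mul_eq_zero.mp hh).resolve_left hxne
          have : (4 : K) = 0 := by
            linear_combination (1 - 3*x^2 - 3*x) * h4 + (3*x + 3) * h5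
          apply mul_ne_zero h2 h2
          linear_combination this
      · -- A = 0
        refine ⟨hA, ?_⟩
        have : (x^2+y^2+1)^3 = 0 := by
          linear_combination hA2 - (x^3+y^3+1) * hA
        exact pow_eq_zero_iff (by norm_num) |>.mp this
  · rintro ⟨hA, hB⟩
    refine ⟨?_, ?_, ?_⟩
    · rw [hA, hB]; ring
    · rw [hA, hB]; ring
    · rw [hA, hB]; ring
end

section
/- Let K be a field of characteristic 0 and let (a,b) ∈ K² satisfy a³+b³+1 = 0 and a²+b²+1 = 0 (so (a,b) is a singular point of f, and a ≠ 0 and b ≠ 0). Write the translated polynomial f(x+a, y+b) ∈ K[x,y] as a sum of homogeneous components F₀ + F₁ + ⋯ + F₆, where F_i is homogeneous of degree i. Then F₀ = 0, F₁ = 0, and F₂ = (3a²x + 3b²y)², which is a nonzero polynomial. In particular each singular point of f has multiplicity exactly 2. -/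
open MvPolynomial

/-- The translate `f(x+a, y+b)` of `fModel` by a point `(a,b)`. -/
noncomputable def fTranslate (K : Type*) [CommRing K] (a b : K) : MvPolynomial (Fin 2) K :=
  aeval ![X 0 + C a, X 1 + C b] (fModel K)

set_option maxHeartbeats 1600000 in
/-- Let `K` have characteristic `0` and `(a,b)` satisfy `a³+b³+1 = 0`,
`a²+b²+1 = 0` (so `(a,b)` is a singular point of `f`, and `a ≠ 0`, `b ≠ 0`).  Writing
`f(x+a,y+b) = F₀ + F₁ + ⋯ + F₆` with `F_i` homogeneous of degree `i`, we have `F₀ = 0`,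
`F₁ = 0`, and `F₂ = (3a²x + 3b²y)² ≠ 0`; in particular each singular point of `f` has
multiplicity exactly `2`. -/
theorem stmt_4 (K : Type*) [Field K] [CharZero K] (a b : K)
    (h1 : a ^ 3 + b ^ 3 + 1 = 0) (h2 : a ^ 2 + b ^ 2 + 1 = 0) :
    a ≠ 0 ∧ b ≠ 0 ∧
    homogeneousComponent 0 (fTranslate K a b) = 0 ∧
    homogeneousComponent 1 (fTranslate K a b) = 0 ∧
    homogeneousComponent 2 (fTranslate K a b)
      = (C (3 * a ^ 2) * X 0 + C (3 * b ^ 2) * X 1) ^ 2 ∧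
    (C (3 * a ^ 2) * X 0 + C (3 * b ^ 2) * X 1 : MvPolynomial (Fin 2) K) ^ 2 ≠ 0 := by
  have ha : a ≠ 0 := by
    rintro rfl
    have hb1 : b = 1 := by linear_combination b * h2 - h1
    rw [hb1] at h2; norm_num at h2
  have hb : b ≠ 0 := by
    rintro rfl
    have ha1 : a = 1 := by linear_combination a * h2 - h1
    rw [ha1] at h2; norm_num at h2
  -- homogeneous pieces
  set L3 : MvPolynomial (Fin 2) K := C (3 * a ^ 2) * X 0 + C (3 * b ^ 2) * X 1 with hL3
  set Q3 : MvPolynomial (Fin 2) K := C (3 * a) * X 0 ^ 2 + C (3 * b) * X 1 ^ 2 with hQ3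
  set Cub : MvPolynomial (Fin 2) K := X 0 ^ 3 + X 1 ^ 3 with hCub
  set L2 : MvPolynomial (Fin 2) K := C (2 * a) * X 0 + C (2 * b) * X 1 with hL2
  set Q : MvPolynomial (Fin 2) K := X 0 ^ 2 + X 1 ^ 2 with hQ
  have hC1 : (C a : MvPolynomial (Fin 2) K) ^ 3 + C b ^ 3 + 1 = 0 := by
    rw [← map_pow, ← map_pow, ← map_one (C : K →+* MvPolynomial (Fin 2) K),
      ← map_add, ← map_add, h1, map_zero]
  have hC2 : (C a : MvPolynomial (Fin 2) K) ^ 2 + C b ^ 2 + 1 = 0 := by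
    rw [← map_pow, ← map_pow, ← map_one (C : K →+* MvPolynomial (Fin 2) K),
      ← map_add, ← map_add, h2, map_zero]
  have hft : fTranslate K a b =
      (L3 + Q3 + Cub) ^ 2 + (L2 + Q) ^ 3 := by
    have : fTranslate K a b =
        ((X 0 + C a) ^ 3 + (X 1 + C b) ^ 3 + 1) ^ 2
          + ((X 0 + C a) ^ 2 + (X 1 + C b) ^ 2 + 1) ^ 3 := by
      simp only [fTranslate, fModel, map_add, map_pow, map_one, aeval_X,
        Matrix.cons_val_zero, Matrix.cons_val_one, Matrix.head_cons]
    rw [this, hL3, hQ3, hCub, hL2, hQ]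
    simp only [map_mul, map_pow, map_ofNat]
    linear_combination (((X 0 + C a) ^ 3 + (X 1 + C b) ^ 3 + 1)
        + (3 * C a ^ 2 * X 0 + 3 * C b ^ 2 * X 1 + (3 * C a * X 0 ^ 2 + 3 * C b * X 1 ^ 2)
          + (X 0 ^ 3 + X 1 ^ 3))) * hC1
      + (((X 0 + C a) ^ 2 + (X 1 + C b) ^ 2 + 1) ^ 2
        + ((X 0 + C a) ^ 2 + (X 1 + C b) ^ 2 + 1) * (2 * C a * X 0 + 2 * C b * X 1 + (X 0 ^ 2 + X 1 ^ 2))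
        + (2 * C a * X 0 + 2 * C b * X 1 + (X 0 ^ 2 + X 1 ^ 2)) ^ 2) * hC2
  -- decomposition into homogeneous components
  set F3 : MvPolynomial (Fin 2) K := 2 * L3 * Q3 + L2 ^ 3 with hF3
  set F4 : MvPolynomial (Fin 2) K := Q3 ^ 2 + 2 * L3 * Cub + 3 * L2 ^ 2 * Q with hF4
  set F5 : MvPolynomial (Fin 2) K := 2 * Q3 * Cub + 3 * L2 * Q ^ 2 with hF5
  set F6 : MvPolynomial (Fin 2) K := Cub ^ 2 + Q ^ 3 with hF6
  have hdec : fTranslate K a b = L3 ^ 2 + F3 + F4 + F5 + F6 := by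
    rw [hft, hF3, hF4, hF5, hF6]; ring
  have hXh : ∀ i : Fin 2, (X i : MvPolynomial (Fin 2) K).IsHomogeneous 1 :=
    fun i => isHomogeneous_X K i
  have h2' : (2 : MvPolynomial (Fin 2) K) = C 2 := (map_ofNat (C : K →+* _) 2).symm
  have h3' : (3 : MvPolynomial (Fin 2) K) = C 3 := (map_ofNat (C : K →+* _) 3).symm
  have hL3h : L3.IsHomogeneous 1 :=
    (isHomogeneous_C_mul_X _ _).add (isHomogeneous_C_mul_X _ _)
  have hQ3h : Q3.IsHomogeneous 2 :=
    (((hXh 0).pow 2).C_mul (3 * a)).add (((hXh 1).pow 2).C_mul (3 * b))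
  have hCubh : Cub.IsHomogeneous 3 := ((hXh 0).pow 3).add ((hXh 1).pow 3)
  have hL2h : L2.IsHomogeneous 1 :=
    (isHomogeneous_C_mul_X _ _).add (isHomogeneous_C_mul_X _ _)
  have hQh : Q.IsHomogeneous 2 := ((hXh 0).pow 2).add ((hXh 1).pow 2)
  have hF2h : (L3 ^ 2).IsHomogeneous 2 := hL3h.pow 2
  have hF3h : F3.IsHomogeneous 3 := by
    rw [hF3, mul_assoc, h2']
    exact ((hL3h.mul hQ3h).C_mul 2).add (hL2h.pow 3)
  have hF4h : F4.IsHomogeneous 4 := by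
    rw [hF4, mul_assoc, h2', mul_assoc, h3']
    exact (((hQ3h.pow 2).add ((hL3h.mul hCubh).C_mul 2))).add
      (((hL2h.pow 2).mul hQh).C_mul 3)
  have hF5h : F5.IsHomogeneous 5 := by
    rw [hF5, mul_assoc, h2', mul_assoc, h3']
    exact ((hQ3h.mul hCubh).C_mul 2).add ((hL2h.mul (hQh.pow 2)).C_mul 3)
  have hF6h : F6.IsHomogeneous 6 := (hCubh.pow 2).add (hQh.pow 3)
  have key : ∀ n : ℕ, homogeneousComponent n (fTranslate K a b) =
      (if n = 2 then L3 ^ 2 else 0) + (if n = 3 then F3 else 0) + (if n = 4 then F4 else 0)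
        + (if n = 5 then F5 else 0) + (if n = 6 then F6 else 0) := by
    intro n
    rw [hdec, map_add, map_add, map_add, map_add,
      homogeneousComponent_of_mem ((mem_homogeneousSubmodule _ _).2 hF2h),
      homogeneousComponent_of_mem ((mem_homogeneousSubmodule _ _).2 hF3h),
      homogeneousComponent_of_mem ((mem_homogeneousSubmodule _ _).2 hF4h),
      homogeneousComponent_of_mem ((mem_homogeneousSubmodule _ _).2 hF5h),
      homogeneousComponent_of_mem ((mem_homogeneousSubmodule _ _).2 hF6h)]
  have hne : (L3 : MvPolynomial (Fin 2) K) ^ 2 ≠ 0 := by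
    refine pow_ne_zero 2 fun h => ?_
    have hc := congrArg (coeff (Finsupp.single 0 1)) h
    rw [hL3] at hc
    simp only [coeff_add, coeff_C_mul, coeff_X', coeff_zero] at hc
    norm_num [Finsupp.single_eq_single_iff] at hc
    exact ha hc
  refine ⟨ha, hb, ?_, ?_, ?_, hne⟩
  · rw [key 0]; norm_num
  · rw [key 1]; norm_num
  · rw [key 2]; norm_num
end

section
/- Consider the following three Weierstrass curves over ℚ, given by coefficient tuples (a₁, a₂, a₃, a₄, a₆): W₁ = (−3, 0, −9, −27/2, −27), i.e. y² − 3xy − 9y = x³ − (27/2)x − 27; W₂ = (−96, 3456, 110592, 14598144, −5718933504), i.e. y² − 96xy + 110592y = x³ + 3456x² + 14598144x − 5718933504; and W₃ = (0, 0, 0, −27, −378), i.e. y² = x³ − 27x − 378. All three curves have j-invariant equal to −36; in particular W₁ and W₂ have equal j-invariants. -/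
/-- The Weierstrass curve `y² − 3xy − 9y = x³ − (27/2)x − 27`, a model of the quotient
curve `C/(1,2)`. -/
def W₁ : WeierstrassCurve ℚ := ⟨-3, 0, -9, -27/2, -27⟩

/-- The Weierstrass curve `y² − 96xy + 110592y = x³ + 3456x² + 14598144x − 5718933504`,
a model of the quotient curve `C/(1,2,3,4)`. -/
def W₂ : WeierstrassCurve ℚ := ⟨-96, 3456, 110592, 14598144, -5718933504⟩

/-- The Weierstrass curve `y² = x³ − 27x − 378`, the common short Weierstrass form. -/
def W₃ : WeierstrassCurve ℚ := ⟨0, 0, 0, -27, -378⟩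

/-- All three Weierstrass curves `W₁`, `W₂`, `W₃` have j-invariant
`c₄³/Δ` equal to `−36`; in particular `W₁` and `W₂` have equal j-invariants. -/
theorem stmt_6 :
    W₁.c₄ ^ 3 / W₁.Δ = -36 ∧
    W₂.c₄ ^ 3 / W₂.Δ = -36 ∧
    W₃.c₄ ^ 3 / W₃.Δ = -36 ∧
    W₁.c₄ ^ 3 / W₁.Δ = W₂.c₄ ^ 3 / W₂.Δ := by
  refine ⟨?_, ?_, ?_, ?_⟩ <;>
  simp only [W₁, W₂, W₃, WeierstrassCurve.c₄, WeierstrassCurve.Δ, WeierstrassCurve.b₂,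
    WeierstrassCurve.b₄, WeierstrassCurve.b₆, WeierstrassCurve.b₈] <;> norm_num
end

section
/- In the group algebra ℚ[S₄] of the symmetric group S₄ on 4 letters, define for each subgroup H ≤ S₄ the idempotent ε_H = (1/|H|)·Σ_{h∈H} h. Let σ₁,…,σ₆ be the six subgroups of order 2 generated by the transpositions (1,2), (1,3), (1,4), (2,3), (2,4), (3,4); let τ₁,…,τ₄ be the four subgroups of order 3 generated by (1,2,3), (1,2,4), (1,3,4), (2,3,4); and let F₁, F₂, F₃ be the three cyclic subgroups of order 4 generated by (1,2,3,4), (1,2,4,3), (1,3,2,4). Then 12·ε_{⟨id⟩} + 24·ε_{S₄} = 2(ε_{σ₁} + ⋯ + ε_{σ₆}) + 3(ε_{τ₁} + ⋯ + ε_{τ₄}) + 4(ε_{F₁} + ε_{F₂} + ε_{F₃}). -/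
open Equiv

/-- The idempotent `ε_H = (1/|H|)·Σ_{h∈H} h` in the group algebra `ℚ[S₄]` attached to a
subgroup `H ≤ S₄`. -/
noncomputable def eps (H : Subgroup (Equiv.Perm (Fin 4))) :
    MonoidAlgebra ℚ (Equiv.Perm (Fin 4)) :=
  (Nat.card H : ℚ)⁻¹ •
    ∑ᶠ h ∈ (H : Set (Equiv.Perm (Fin 4))), MonoidAlgebra.of ℚ (Equiv.Perm (Fin 4)) h

lemma eps_eq_finset (H : Subgroup (Perm (Fin 4))) (s : Finset (Perm (Fin 4)))
    (hs : (H : Set (Perm (Fin 4))) = ↑s) (n : ℕ) (hn : Nat.card H = n) :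
    eps H = (n : ℚ)⁻¹ • ∑ h ∈ s, MonoidAlgebra.of ℚ (Perm (Fin 4)) h := by
  rw [eps, hs, finsum_mem_coe_finset, hn]

lemma eps_list (H : Subgroup (Perm (Fin 4))) (l : List (Perm (Fin 4))) (hl : l.Nodup)
    (hs : (H : Set (Perm (Fin 4))) = ↑l.toFinset) (n : ℕ) (hn : Nat.card H = n) :
    eps H = (n : ℚ)⁻¹ • (l.map (MonoidAlgebra.of ℚ (Perm (Fin 4)))).sum := by
  rw [eps_eq_finset H l.toFinset hs n hn, List.sum_toFinset _ hl]

lemma eps_zpowers (x : Perm (Fin 4)) (n : ℕ) (hn : orderOf x = n)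
    (l : List (Perm (Fin 4))) (hl : l.Nodup)
    (himg : (Finset.range n).image (x ^ ·) = l.toFinset) :
    eps (Subgroup.zpowers x) = (n : ℚ)⁻¹ • (l.map (MonoidAlgebra.of ℚ (Perm (Fin 4)))).sum := by
  refine eps_list _ l hl ?_ n (by rw [Nat.card_zpowers, hn])
  ext g
  rw [SetLike.mem_coe, mem_zpowers_iff_mem_range_orderOf, hn, himg, Finset.mem_coe]

lemma numul (n : ℕ) [n.AtLeastTwo] (x : MonoidAlgebra ℚ (Perm (Fin 4))) :
    (OfNat.ofNat n : MonoidAlgebra ℚ (Perm (Fin 4))) * x = (OfNat.ofNat n : ℚ) • x := by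
  rw [← map_ofNat (algebraMap ℚ (MonoidAlgebra ℚ (Perm (Fin 4)))) n, ← Algebra.smul_def]

/-- In `ℚ[S₄]`, with `σ₁,…,σ₆` the subgroups generated by the six
transpositions, `τ₁,…,τ₄` the four subgroups generated by 3-cycles, and `F₁,F₂,F₃` the
three cyclic subgroups of order 4, one has
`12·ε_{⟨id⟩} + 24·ε_{S₄} = 2(ε_{σ₁}+⋯+ε_{σ₆}) + 3(ε_{τ₁}+⋯+ε_{τ₄}) + 4(ε_{F₁}+ε_{F₂}+ε_{F₃})`. -/
theorem stmt_13 :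
    12 * eps ⊥ + 24 * eps ⊤
      = 2 * (eps (Subgroup.zpowers (c[0, 1] : Equiv.Perm (Fin 4)))
            + eps (Subgroup.zpowers (c[0, 2] : Equiv.Perm (Fin 4)))
            + eps (Subgroup.zpowers (c[0, 3] : Equiv.Perm (Fin 4)))
            + eps (Subgroup.zpowers (c[1, 2] : Equiv.Perm (Fin 4)))
            + eps (Subgroup.zpowers (c[1, 3] : Equiv.Perm (Fin 4)))
            + eps (Subgroup.zpowers (c[2, 3] : Equiv.Perm (Fin 4))))
        + 3 * (eps (Subgroup.zpowers (c[0, 1, 2] : Equiv.Perm (Fin 4)))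
            + eps (Subgroup.zpowers (c[0, 1, 3] : Equiv.Perm (Fin 4)))
            + eps (Subgroup.zpowers (c[0, 2, 3] : Equiv.Perm (Fin 4)))
            + eps (Subgroup.zpowers (c[1, 2, 3] : Equiv.Perm (Fin 4))))
        + 4 * (eps (Subgroup.zpowers (c[0, 1, 2, 3] : Equiv.Perm (Fin 4)))
            + eps (Subgroup.zpowers (c[0, 1, 3, 2] : Equiv.Perm (Fin 4)))
            + eps (Subgroup.zpowers (c[0, 2, 1, 3] : Equiv.Perm (Fin 4)))) := by
  rw [eps_list ⊥ [1] (by decide) (by ext g; simp) 1 Subgroup.card_bot,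
    eps_list ⊤
      [1, c[0,1], c[0,2], c[0,3], c[1,2], c[1,3], c[2,3],
       c[0,1,2], c[0,2,1], c[0,1,3], c[0,3,1], c[0,2,3], c[0,3,2], c[1,2,3], c[1,3,2],
       c[0,1,2,3], c[0,3,2,1], c[0,1,3,2], c[0,2,3,1], c[0,2,1,3], c[0,3,1,2],
       c[0,2] * c[1,3], c[0,3] * c[1,2], c[0,1] * c[2,3]] (by decide)
      (by rw [Subgroup.coe_top]; symm; rw [Finset.coe_eq_univ]; decide)
      24 (by rw [Subgroup.card_top, Nat.card_eq_fintype_card]; decide),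
    eps_zpowers (c[0,1]) 2 ((orderOf_eq_iff (by norm_num)).mpr ⟨by decide, by decide⟩)
      [1, c[0,1]] (by decide) (by decide),
    eps_zpowers (c[0,2]) 2 ((orderOf_eq_iff (by norm_num)).mpr ⟨by decide, by decide⟩)
      [1, c[0,2]] (by decide) (by decide),
    eps_zpowers (c[0,3]) 2 ((orderOf_eq_iff (by norm_num)).mpr ⟨by decide, by decide⟩)
      [1, c[0,3]] (by decide) (by decide),
    eps_zpowers (c[1,2]) 2 ((orderOf_eq_iff (by norm_num)).mpr ⟨by decide, by decide⟩)
      [1, c[1,2]] (by decide) (by decide),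
    eps_zpowers (c[1,3]) 2 ((orderOf_eq_iff (by norm_num)).mpr ⟨by decide, by decide⟩)
      [1, c[1,3]] (by decide) (by decide),
    eps_zpowers (c[2,3]) 2 ((orderOf_eq_iff (by norm_num)).mpr ⟨by decide, by decide⟩)
      [1, c[2,3]] (by decide) (by decide),
    eps_zpowers (c[0,1,2]) 3 ((orderOf_eq_iff (by norm_num)).mpr ⟨by decide, by decide⟩)
      [1, c[0,1,2], c[0,2,1]] (by decide) (by decide),
    eps_zpowers (c[0,1,3]) 3 ((orderOf_eq_iff (by norm_num)).mpr ⟨by decide, by decide⟩)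
      [1, c[0,1,3], c[0,3,1]] (by decide) (by decide),
    eps_zpowers (c[0,2,3]) 3 ((orderOf_eq_iff (by norm_num)).mpr ⟨by decide, by decide⟩)
      [1, c[0,2,3], c[0,3,2]] (by decide) (by decide),
    eps_zpowers (c[1,2,3]) 3 ((orderOf_eq_iff (by norm_num)).mpr ⟨by decide, by decide⟩)
      [1, c[1,2,3], c[1,3,2]] (by decide) (by decide),
    eps_zpowers (c[0,1,2,3]) 4 ((orderOf_eq_iff (by norm_num)).mpr ⟨by decide, by decide⟩)
      [1, c[0,1,2,3], c[0,2] * c[1,3], c[0,3,2,1]] (by decide) (by decide),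
    eps_zpowers (c[0,1,3,2]) 4 ((orderOf_eq_iff (by norm_num)).mpr ⟨by decide, by decide⟩)
      [1, c[0,1,3,2], c[0,3] * c[1,2], c[0,2,3,1]] (by decide) (by decide),
    eps_zpowers (c[0,2,1,3]) 4 ((orderOf_eq_iff (by norm_num)).mpr ⟨by decide, by decide⟩)
      [1, c[0,2,1,3], c[0,1] * c[2,3], c[0,3,1,2]] (by decide) (by decide),
    numul, numul, numul, numul, numul]
  simp only [List.map_cons, List.map_nil, List.sum_cons, List.sum_nil, add_zero,
    Nat.cast_ofNat, Nat.cast_one, inv_one, one_smul]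
  module
end
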